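/- Fix b > 0 and r > 0, and define for each type μ the total inside share at price shift t by s_μ(t) = Σ_k exp(v_k(μ) − b·t) / (1 + Σ_k exp(v_k(μ) − b·t)) over k ∈ {1,2}. Then s_μ(r)/s_μ(0) = (1 + Σ_k exp(v_k(μ))) / (exp(b·r) + Σ_k exp(v_k(μ))), and this ratio is strictly increasing in Σ_k exp(v_k(μ)). Consequently, if v_k(μ) > v_k(μ') for both k (e.g., when μ > μ' and |γ1| < 1), then s_μ(r)/s_μ(0) > s_μ'(r)/s_μ'(0). -/

import Mathlib

/-- Mean utility of product 1. -/
noncomputable def v1 (a b p1 μ : ℝ) : ℝ := a - b * p1 + μ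

/-- Mean utility of product 2. -/
noncomputable def v2 (a b γ0 γ1 p2 μ : ℝ) : ℝ := a - b * p2 + γ0 + (1 + γ1) * μ

/-- Total inside share of type μ under a uniform price shift t. -/
noncomputable def stot (a b γ0 γ1 p1 p2 t μ : ℝ) : ℝ :=
  (Real.exp (v1 a b p1 μ - b * t) + Real.exp (v2 a b γ0 γ1 p2 μ - b * t)) /
    (1 + Real.exp (v1 a b p1 μ - b * t) + Real.exp (v2 a b γ0 γ1 p2 μ - b * t))

/-- Ratio formula for the total inside share under a uniform price shift,
its monotonicity in the sum of exponentiated utilities, and the comparison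
across types. -/
theorem total_share_ratio (a b γ0 γ1 p1 p2 r : ℝ) (hb : 0 < b) (hr : 0 < r) :
    (∀ μ : ℝ, stot a b γ0 γ1 p1 p2 r μ / stot a b γ0 γ1 p1 p2 0 μ
      = (1 + (Real.exp (v1 a b p1 μ) + Real.exp (v2 a b γ0 γ1 p2 μ)))
        / (Real.exp (b * r) + (Real.exp (v1 a b p1 μ) + Real.exp (v2 a b γ0 γ1 p2 μ)))) ∧
    (∀ x y : ℝ, 0 < y → y < x →
      (1 + y) / (Real.exp (b * r) + y) < (1 + x) / (Real.exp (b * r) + x)) ∧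
    (∀ μ μ' : ℝ, v1 a b p1 μ' < v1 a b p1 μ → v2 a b γ0 γ1 p2 μ' < v2 a b γ0 γ1 p2 μ →
      stot a b γ0 γ1 p1 p2 r μ' / stot a b γ0 γ1 p1 p2 0 μ'
        < stot a b γ0 γ1 p1 p2 r μ / stot a b γ0 γ1 p1 p2 0 μ) := by
  have hE : (1:ℝ) < Real.exp (b * r) := by
    have : 0 < b * r := mul_pos hb hr
    simpa using Real.exp_lt_exp.mpr this
  have hE0 : (0:ℝ) < Real.exp (b * r) := Real.exp_pos _
  have hformula : ∀ μ : ℝ, stot a b γ0 γ1 p1 p2 r μ / stot a b γ0 γ1 p1 p2 0 μ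
      = (1 + (Real.exp (v1 a b p1 μ) + Real.exp (v2 a b γ0 γ1 p2 μ)))
        / (Real.exp (b * r) + (Real.exp (v1 a b p1 μ) + Real.exp (v2 a b γ0 γ1 p2 μ))) := by
    intro μ
    have e1 : 0 < Real.exp (v1 a b p1 μ) := Real.exp_pos _
    have e2 : 0 < Real.exp (v2 a b γ0 γ1 p2 μ) := Real.exp_pos _
    unfold stot
    rw [Real.exp_sub, Real.exp_sub]
    simp only [mul_zero, Real.exp_zero, div_one]
    set E := Real.exp (b * r)
    set A := Real.exp (v1 a b p1 μ)
    set B := Real.exp (v2 a b γ0 γ1 p2 μ)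
    have h1 : (0:ℝ) < 1 + A / E + B / E := by positivity
    have h2 : (0:ℝ) < 1 + A + B := by positivity
    have h3 : (0:ℝ) < E + (A + B) := by positivity
    field_simp
    simp only [A, B]
    ring
  have hmono : ∀ x y : ℝ, 0 < y → y < x →
      (1 + y) / (Real.exp (b * r) + y) < (1 + x) / (Real.exp (b * r) + x) := by
    intro x y hy hyx
    rw [div_lt_div_iff₀ (by positivity) (by nlinarith)]
    nlinarith
  refine ⟨hformula, hmono, ?_⟩
  intro μ μ' h1 h2
  rw [hformula, hformula]
  exact hmono _ _ (by positivity)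
    (add_lt_add (Real.exp_lt_exp.mpr h1) (Real.exp_lt_exp.mpr h2))
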